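/- arXiv:2401.03292 — 5 statements merged into one kernel-verified Lean document; each statement's English description precedes it below -/
import Mathlib

section
/- For every integer n ≥ 1, the 2-rank of the special orthogonal group SO(n) equals n − 1. -/
/-- The Borel–Serre 2-rank `r₂(G)`: the supremum of those `k` such that `(ZMod 2)^k`
embeds into `G` by an injective group homomorphism. -/
noncomputable def twoRank (G : Type*) [Group G] : ℕ :=
  sSup {k : ℕ | ∃ f : Multiplicative (Fin k → ZMod 2) →* G, Function.Injective f}

/-- `SO(n)`: the subgroup of the orthogonal group `O(n)` of matrices with determinant 1. -/
def SO (n : ℕ) : Subgroup (Matrix.orthogonalGroup (Fin n) ℝ) where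
  carrier := {A | Matrix.det (A : Matrix (Fin n) (Fin n) ℝ) = 1}
  one_mem' := by simp
  mul_mem' := by
    intro A B hA hB
    simp only [Set.mem_setOf_eq, Submonoid.coe_mul, Matrix.det_mul] at *
    rw [hA, hB, one_mul]
  inv_mem' := by
    intro A hA
    have h : ((A⁻¹ : Matrix.orthogonalGroup (Fin n) ℝ) : Matrix (Fin n) (Fin n) ℝ)
        = star (A : Matrix (Fin n) (Fin n) ℝ) := by
      rw [← Unitary.star_eq_inv, Unitary.coe_star]
    simp only [Set.mem_setOf_eq] at *
    rw [h, Matrix.star_eq_conjTranspose, Matrix.det_conjTranspose, hA, star_one]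


open Matrix

noncomputable section TwoRankAux

/-- sign character `ZMod 2 → ℝ`. -/
def sgn2 (a : ZMod 2) : ℝ := if a = 0 then 1 else -1

lemma zmod2_eq (a : ZMod 2) : a = 0 ∨ a = 1 := by revert a; decide

lemma sgn2_add (a b : ZMod 2) : sgn2 (a + b) = sgn2 a * sgn2 b := by
  rcases zmod2_eq a with ha | ha <;> rcases zmod2_eq b with hb | hb <;>
    subst ha <;> subst hb <;> norm_num [sgn2] <;> rfl

lemma sgn2_zero : sgn2 0 = 1 := rfl

lemma sgn2_mul_self (a : ZMod 2) : sgn2 a * sgn2 a = 1 := by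
  rcases zmod2_eq a with ha | ha <;> subst ha <;> norm_num [sgn2]

lemma sgn2_inj : Function.Injective sgn2 := by
  intro a b hab
  rcases zmod2_eq a with ha | ha <;> rcases zmod2_eq b with hb | hb <;>
    subst ha <;> subst hb <;> first | rfl | (norm_num [sgn2] at hab)

lemma sgn2_sum {ι : Type*} (s : Finset ι) (g : ι → ZMod 2) :
    sgn2 (∑ i ∈ s, g i) = ∏ i ∈ s, sgn2 (g i) := by
  classical
  induction s using Finset.cons_induction with
  | empty => simp [sgn2_zero]
  | cons i s hi ih => rw [Finset.sum_cons, Finset.prod_cons, sgn2_add, ih]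

/-- the diagonal-entry vector used for the lower bound. -/
def dvec (m : ℕ) (x : Fin m → ZMod 2) : Fin (m + 1) → ℝ :=
  fun i => sgn2 ((Fin.snoc x (∑ j, x j) : Fin (m+1) → ZMod 2) i)

lemma dvec_add (m : ℕ) (x y : Fin m → ZMod 2) :
    dvec m (x + y) = fun i => dvec m x i * dvec m y i := by
  funext i
  unfold dvec
  rw [← sgn2_add]
  congr 1
  induction i using Fin.lastCases with
  | last => simp [Fin.snoc_last, Finset.sum_add_distrib]
  | cast i => simp [Fin.snoc_castSucc]

lemma dvec_det (m : ℕ) (x : Fin m → ZMod 2) : ∏ i, dvec m x i = 1 := by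
  unfold dvec
  rw [← sgn2_sum]
  have : ∑ i : Fin (m + 1), (Fin.snoc x (∑ j, x j) : Fin (m+1) → ZMod 2) i = 0 := by
    rw [Fin.sum_univ_castSucc]
    simp [Fin.snoc_castSucc, Fin.snoc_last, CharTwo.add_self_eq_zero]
  rw [this, sgn2_zero]

lemma dvec_orth (m : ℕ) (x : Fin m → ZMod 2) :
    diagonal (dvec m x) ∈ Matrix.orthogonalGroup (Fin (m+1)) ℝ := by
  rw [Matrix.mem_orthogonalGroup_iff]
  have : star (diagonal (dvec m x)) = diagonal (dvec m x) := by
    rw [Matrix.star_eq_conjTranspose, Matrix.diagonal_conjTranspose]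
    simp
  rw [Matrix.diagonal_transpose, diagonal_mul_diagonal]
  rw [show (fun i => dvec m x i * dvec m x i) = fun _ => (1:ℝ) from funext fun i => sgn2_mul_self _]
  exact Matrix.diagonal_one

/-- Lower-bound homomorphism. -/
def soDiag (m : ℕ) : Multiplicative (Fin m → ZMod 2) →* SO (m + 1) :=
  MonoidHom.mk' (fun x =>
      ⟨⟨diagonal (dvec m x.toAdd), dvec_orth m x.toAdd⟩, by
        show Matrix.det (diagonal (dvec m x.toAdd)) = 1
        rw [Matrix.det_diagonal, dvec_det]⟩)
    (by
      intro x y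
      apply Subtype.ext
      apply Subtype.ext
      show diagonal (dvec m (x.toAdd + y.toAdd)) = diagonal (dvec m x.toAdd) * diagonal (dvec m y.toAdd)
      rw [diagonal_mul_diagonal, dvec_add])

lemma soDiag_injective (m : ℕ) : Function.Injective (soDiag m) := by
  intro x y hxy
  have h : diagonal (dvec m x.toAdd) = diagonal (dvec m y.toAdd) :=
    congrArg (fun A : SO (m+1) => ((A : Matrix.orthogonalGroup (Fin (m+1)) ℝ) : Matrix (Fin (m+1)) (Fin (m+1)) ℝ)) hxy
  have h2 : ∀ i, dvec m x.toAdd i = dvec m y.toAdd i := by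
    intro i
    have := congrFun (congrFun h i) i
    simpa using this
  have : x.toAdd = y.toAdd := by
    funext i
    apply sgn2_inj
    have := h2 i.castSucc
    unfold dvec at this
    simpa [Fin.snoc_castSucc] using this
  exact this

open Module.End in
lemma so_upper_bound {m k : ℕ} (f : Multiplicative (Fin k → ZMod 2) →* SO (m + 1))
    (hf : Function.Injective f) : k ≤ m := by
  classical
  set G := Multiplicative (Fin k → ZMod 2) with hG
  let M : G → Matrix (Fin (m+1)) (Fin (m+1)) ℝ :=
    fun g => ((f g : Matrix.orthogonalGroup (Fin (m+1)) ℝ) : Matrix (Fin (m+1)) (Fin (m+1)) ℝ)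
  have hMmul : ∀ g h : G, M (g * h) = M g * M h := by
    intro g h
    show ((f (g*h) : Matrix.orthogonalGroup (Fin (m+1)) ℝ) : Matrix (Fin (m+1)) (Fin (m+1)) ℝ) = _
    rw [_root_.map_mul]; rfl
  have hM1 : M 1 = 1 := by
    show ((f 1 : Matrix.orthogonalGroup (Fin (m+1)) ℝ) : Matrix (Fin (m+1)) (Fin (m+1)) ℝ) = 1
    rw [_root_.map_one]; rfl
  have hsq : ∀ g : G, g * g = 1 := by
    intro g
    apply Multiplicative.toAdd.injective
    funext i
    exact CharTwo.add_self_eq_zero _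
  have hM2 : ∀ g, M g * M g = 1 := fun g => by rw [← hMmul, hsq, hM1]
  have hherm : ∀ g, (M g).IsHermitian := by
    intro g
    have h := (f g).1.2
    rw [Matrix.mem_orthogonalGroup_iff'] at h
    show (M g)ᴴ = M g
    calc (M g)ᴴ = star (M g) * (M g * M g) := by rw [hM2, mul_one, Matrix.star_eq_conjTranspose]
    _ = (star (M g) * M g) * M g := by rw [mul_assoc]
    _ = M g := by
      rw [Matrix.star_eq_conjTranspose, Matrix.conjTranspose_eq_transpose_of_trivial]
      exact (congrArg (· * M g) h).trans (one_mul _)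
  let E := EuclideanSpace ℝ (Fin (m+1))
  let T : G → (E →ₗ[ℝ] E) := fun g => Matrix.toEuclideanLin (M g)
  have hTmul : ∀ g h : G, T (g * h) = T g ∘ₗ T h := by
    intro g h
    show Matrix.toEuclideanLin (M (g*h)) = _
    rw [hMmul, Matrix.toEuclideanLin_eq_toLin]
    exact Matrix.toLin_mul _ (PiLp.basisFun 2 ℝ (Fin (m+1))) _ _ _
  have hT1 : T 1 = LinearMap.id := by
    show Matrix.toEuclideanLin (M 1) = _
    rw [hM1, Matrix.toEuclideanLin_eq_toLin, Matrix.toLin_one]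
  have hTsym : ∀ g, (T g).IsSymmetric := fun g =>
    Matrix.isHermitian_iff_isSymmetric.mp (hherm g)
  have hTcomm : Pairwise (Function.onFun Commute T) := by
    intro g h _
    show T g * T h = T h * T g
    rw [Module.End.mul_eq_comp, Module.End.mul_eq_comp, ← hTmul, ← hTmul, mul_comm]
  have hsup : ⨆ χ : G → ℝ, ⨅ g, eigenspace (T g) (χ g) = ⊤ :=
    LinearMap.IsSymmetric.iSup_iInf_eq_top_of_commute hTsym hTcomm
  set V : (G → ℝ) → Submodule ℝ E := fun χ => ⨅ g, eigenspace (T g) (χ g) with hVdef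
  set s : Set E := ⋃ χ : G → ℝ, (V χ : Set E) with hsdef
  have hspan : ⊤ ≤ Submodule.span ℝ s := by
    rw [← hsup]
    refine iSup_le fun χ => ?_
    rw [← Submodule.span_eq (V χ)]
    exact Submodule.span_mono (Set.subset_iUnion (fun χ => (V χ : Set E)) χ)
  let b₀ := Module.Basis.ofSpan hspan
  haveI : Fintype ((linearIndepOn_empty ℝ (id : E → E)).extend (Set.empty_subset s)) :=
    FiniteDimensional.fintypeBasisIndex b₀
  have hcard : Fintype.card ((linearIndepOn_empty ℝ (id : E → E)).extend (Set.empty_subset s)) = m + 1 := by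
    rw [← Module.finrank_eq_card_basis b₀]
    simp [E, finrank_euclideanSpace]
  let b := b₀.reindex (Fintype.equivFinOfCardEq hcard)
  have hbmem : ∀ i, ∃ χ : G → ℝ, ∀ g, T g (b i) = χ g • b i := by
    intro i
    have hmem : (b i : E) ∈ s := by
      have h1 : b i = ((Fintype.equivFinOfCardEq hcard).symm i : E) := by
        rw [Module.Basis.reindex_apply, Module.Basis.ofSpan_apply_self]
      rw [h1]
      exact (linearIndepOn_empty ℝ (id : E → E)).extend_subset (Set.empty_subset s)
        ((Fintype.equivFinOfCardEq hcard).symm i).2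
    rw [hsdef, Set.mem_iUnion] at hmem
    obtain ⟨χ, hχ⟩ := hmem
    refine ⟨χ, fun g => ?_⟩
    have h2 : b i ∈ V χ := hχ
    rw [hVdef] at h2
    have h3 := (Submodule.mem_iInf _).mp h2 g
    exact mem_eigenspace_iff.mp h3
  choose w hw using hbmem
  have hwpm : ∀ i g, w i g = 1 ∨ w i g = -1 := by
    intro i g
    have h1 : T g (T g (b i)) = b i := by
      have h0 : T g ∘ₗ T g = LinearMap.id := by rw [← hTmul, hsq, hT1]
      calc T g (T g (b i)) = (T g ∘ₗ T g) (b i) := rfl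
      _ = b i := by rw [h0]; rfl
    rw [hw, _root_.map_smul, hw, smul_smul] at h1
    have h2 : (w i g * w i g - 1) • (b i) = 0 := by
      rw [sub_smul, one_smul, h1, sub_self]
    rcases smul_eq_zero.mp h2 with h | h
    · exact mul_self_eq_one_iff.mp (sub_eq_zero.mp h)
    · exact absurd h (b.ne_zero i)
  have hdet : ∀ g, ∏ i, w i g = 1 := by
    intro g
    have hmat : LinearMap.toMatrix b b (T g) = Matrix.diagonal (fun i => w i g) := by
      ext i j
      rw [LinearMap.toMatrix_apply, hw, _root_.map_smul, Module.Basis.repr_self,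
        Finsupp.smul_apply, Finsupp.single_apply, Matrix.diagonal_apply]
      by_cases hij : j = i
      · subst hij; simp
      · simp [hij, Ne.symm hij]
    have h1 : LinearMap.det (T g) = Matrix.det (M g) := by
      show LinearMap.det (Matrix.toEuclideanLin (M g)) = _
      rw [Matrix.toEuclideanLin_eq_toLin, LinearMap.det_toLin]
    have h2 : LinearMap.det (T g) = Matrix.det (LinearMap.toMatrix b b (T g)) :=
      (LinearMap.det_toMatrix b (T g)).symm
    have h3 : Matrix.det (M g) = 1 := (f g).2
    rw [hmat, Matrix.det_diagonal] at h2
    rw [h1, h3] at h2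
    exact h2.symm
  have hTinj : Function.Injective T := by
    intro g h hgh
    apply hf
    apply Subtype.ext
    apply Subtype.ext
    exact Matrix.toEuclideanLin.injective hgh
  let Φ : G → (Fin m → Bool) := fun g i => decide (w (Fin.castSucc i) g = 1)
  have hΦ : Function.Injective Φ := by
    intro g h hgh
    have hwc : ∀ i : Fin m, w (Fin.castSucc i) g = w (Fin.castSucc i) h := by
      intro i
      have hd := congrFun hgh i
      simp only [Φ, decide_eq_decide] at hd
      rcases hwpm (Fin.castSucc i) g with h1 | h1 <;>
        rcases hwpm (Fin.castSucc i) h with h2 | h2 <;>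
        rw [h1, h2] <;> rw [h1, h2] at hd <;> norm_num at hd
    have hlast : w (Fin.last m) g = w (Fin.last m) h := by
      have hg := hdet g
      have hh := hdet h
      rw [Fin.prod_univ_castSucc] at hg hh
      have hP : ∏ i : Fin m, w (Fin.castSucc i) g = ∏ i : Fin m, w (Fin.castSucc i) h :=
        Finset.prod_congr rfl (fun i _ => hwc i)
      have hPne : (∏ i : Fin m, w (Fin.castSucc i) g) ≠ 0 := by
        apply Finset.prod_ne_zero_iff.mpr
        intro i _
        rcases hwpm (Fin.castSucc i) g with h1 | h1 <;> rw [h1] <;> norm_num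
      rw [← hP] at hh
      exact mul_left_cancel₀ hPne (hg.trans hh.symm)
    have hall : ∀ i : Fin (m+1), w i g = w i h := by
      intro i
      induction i using Fin.lastCases with
      | last => exact hlast
      | cast i => exact hwc i
    apply hTinj
    apply b.ext
    intro i
    rw [hw, hw, hall]
  have hcount : Fintype.card G ≤ Fintype.card (Fin m → Bool) :=
    Fintype.card_le_of_injective Φ hΦ
  have h1 : Fintype.card G = 2 ^ k := by
    show Fintype.card (Multiplicative (Fin k → ZMod 2)) = 2 ^ k
    rw [Fintype.card_multiplicative, Fintype.card_fun, ZMod.card, Fintype.card_fin]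
  have h2 : Fintype.card (Fin m → Bool) = 2 ^ m := by
    rw [Fintype.card_fun, Fintype.card_bool, Fintype.card_fin]
  rw [h1, h2] at hcount
  exact (Nat.pow_le_pow_iff_right (by norm_num)).mp hcount

end TwoRankAux

/-- Chen–Nagano: the 2-rank of `SO(n)` is `n - 1`. -/
theorem twoRank_SO (n : ℕ) (hn : 1 ≤ n) : twoRank (SO n) = n - 1 := by
  obtain ⟨m, rfl⟩ : ∃ m, n = m + 1 := ⟨n - 1, (Nat.succ_pred_eq_of_pos hn).symm⟩
  have hmem : m ∈ {k : ℕ | ∃ f : Multiplicative (Fin k → ZMod 2) →* SO (m + 1),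
      Function.Injective f} := ⟨soDiag m, soDiag_injective m⟩
  have hub : ∀ j ∈ {k : ℕ | ∃ f : Multiplicative (Fin k → ZMod 2) →* SO (m + 1),
      Function.Injective f}, j ≤ m := by
    rintro j ⟨f, hf⟩
    exact so_upper_bound f hf
  unfold twoRank
  rw [Nat.add_sub_cancel]
  exact le_antisymm (csSup_le ⟨m, hmem⟩ hub) (le_csSup ⟨m, hub⟩ hmem)
end

section
/- For every integer n ≥ 1, the 2-rank of the compact symplectic group Sp(n) equals n. -/
open scoped Quaternion

/-- The compact symplectic group `Sp(n)`: the unitary group of the star ring of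
`n × n` quaternionic matrices. -/
noncomputable abbrev Sp (n : ℕ) := unitary (Matrix (Fin n) (Fin n) ℍ[ℝ])

namespace TwoRankSp

/-- Sign of an element of `ZMod 2`. -/
def sgn (z : ZMod 2) : ℝ := if z = 0 then 1 else -1

lemma zmod2_cases : ∀ z : ZMod 2, z = 0 ∨ z = 1 := by decide

lemma sgn_zero : sgn 0 = 1 := rfl
lemma sgn_one : sgn 1 = -1 := rfl

lemma sgn_mul_self (z : ZMod 2) : sgn z * sgn z = 1 := by
  rcases zmod2_cases z with h | h <;> simp [h, sgn_zero, sgn_one]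

lemma sgn_add (z w : ZMod 2) : sgn (z + w) = sgn z * sgn w := by
  rcases zmod2_cases z with h | h <;> rcases zmod2_cases w with h' | h' <;>
    subst h <;> subst h' <;>
    simp [sgn_zero, sgn_one, show (1 + 1 : ZMod 2) = 0 by decide]

lemma sgn_inj {z w : ZMod 2} (h : sgn z = sgn w) : z = w := by
  rcases zmod2_cases z with hz | hz <;> rcases zmod2_cases w with hw | hw <;>
    subst hz <;> subst hw <;> first | rfl | (exfalso; rw [sgn_zero, sgn_one] at h; norm_num at h)

section Abstract

variable {k : ℕ} {ι : Type*} {R : Type*} [CommRing R]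

/-- `e (sgn z)`. -/
def ee (e : ℝ →+* R) (z : ZMod 2) : R := e (sgn z)

lemma ee_zero (e : ℝ →+* R) : ee e 0 = 1 := by simp [ee, sgn_zero]

lemma ee_mul_self (e : ℝ →+* R) (z : ZMod 2) : ee e z * ee e z = 1 := by
  rw [ee, ← map_mul, sgn_mul_self, map_one]

lemma ee_add (e : ℝ →+* R) (z w : ZMod 2) : ee e (z + w) = ee e z * ee e w := by
  rw [ee, sgn_add, map_mul]; rfl

lemma ee_sum (e : ℝ →+* R) (s : Finset ι) (y : ι → ZMod 2) :
    ee e (∑ i ∈ s, y i) = ∏ i ∈ s, ee e (y i) := by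
  induction s using Finset.cons_induction with
  | empty => simpa using ee_zero e
  | cons i s hi ih => rw [Finset.sum_cons, Finset.prod_cons, ee_add, ih]

lemma half_two (e : ℝ →+* R) : e 2⁻¹ * 2 = 1 := by
  have : ((2 : ℝ)⁻¹ * 2 : ℝ) = 1 := by norm_num
  calc e 2⁻¹ * 2 = e 2⁻¹ * e 2 := by rw [map_ofNat]
  _ = e (2⁻¹ * 2) := (map_mul e _ _).symm
  _ = 1 := by rw [this, map_one]

variable (e : ℝ →+* R) (a : (Fin k → ZMod 2) → R)

/-- The quasi-projection attached to generator `i` and sign `z`. -/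
noncomputable def Q (i : Fin k) (z : ZMod 2) : R := e 2⁻¹ * (1 + ee e z * a (Pi.single i 1))

/-- Joint quasi-projection attached to a character `c`. -/
noncomputable def P (c : Fin k → ZMod 2) : R := ∏ i, Q e a i (c i)

variable (h0 : a 0 = 1) (hadd : ∀ x y, a (x + y) = a x * a y)

lemma a_sq (x : Fin k → ZMod 2) (hadd : ∀ x y, a (x + y) = a x * a y)
    (h0 : a 0 = 1) : a x * a x = 1 := by
  rw [← hadd]
  have : x + x = 0 := by
    funext i
    have : ∀ z : ZMod 2, z + z = 0 := by decide
    exact this (x i)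
  rw [this, h0]

lemma a_sum (h0 : a 0 = 1) (hadd : ∀ x y, a (x + y) = a x * a y)
    (s : Finset ι) (y : ι → (Fin k → ZMod 2)) :
    a (∑ i ∈ s, y i) = ∏ i ∈ s, a (y i) := by
  induction s using Finset.cons_induction with
  | empty => simpa using h0
  | cons i s hi ih => rw [Finset.sum_cons, Finset.prod_cons, hadd, ih]

lemma sum_Q (i : Fin k) : ∑ z : ZMod 2, Q e a i z = 1 := by
  have huniv : (Finset.univ : Finset (ZMod 2)) = {0, 1} := by decide
  rw [huniv, Finset.sum_insert (by decide), Finset.sum_singleton]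
  have h2 := half_two e
  simp only [Q, ee, sgn_zero, sgn_one, map_one, map_neg]
  linear_combination h2

lemma sum_P : ∑ c : Fin k → ZMod 2, P e a c = 1 := by
  simp only [P]
  rw [show (Finset.univ : Finset (Fin k → ZMod 2)) =
      Fintype.piFinset (fun _ => (Finset.univ : Finset (ZMod 2))) from
        (Fintype.piFinset_univ).symm]
  rw [← Finset.prod_univ_sum]
  simp [sum_Q e a]

lemma Q_mul_single (h0 : a 0 = 1) (hadd : ∀ x y, a (x + y) = a x * a y)
    (i : Fin k) (z w : ZMod 2) :
    Q e a i z * a (Pi.single i w) = ee e (z * w) * Q e a i z := by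
  rcases zmod2_cases w with hw | hw
  · subst hw
    simp only [Pi.single_zero, h0, mul_one, mul_zero, ee_zero, one_mul]
  · subst hw
    have hA := a_sq a (Pi.single i 1) hadd h0
    have hu := ee_mul_self e z
    simp only [Q, mul_one]
    linear_combination (e 2⁻¹ * ee e z) * hA - (e 2⁻¹ * a (Pi.single i 1)) * hu

lemma P_mul_a (h0 : a 0 = 1) (hadd : ∀ x y, a (x + y) = a x * a y)
    (c x : Fin k → ZMod 2) :
    P e a c * a x = ee e (∑ i, c i * x i) * P e a c := by
  have hx : a x = ∏ i, a (Pi.single i (x i)) := by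
    rw [← a_sum a h0 hadd, Finset.univ_sum_single]
  rw [P, hx, ← Finset.prod_mul_distrib]
  have : ∀ i ∈ Finset.univ, Q e a i (c i) * a (Pi.single i (x i))
      = ee e (c i * x i) * Q e a i (c i) := fun i _ => Q_mul_single e a h0 hadd i (c i) (x i)
  rw [Finset.prod_congr rfl this, Finset.prod_mul_distrib, ← ee_sum]

lemma Q_mul_Q_same (h0 : a 0 = 1) (hadd : ∀ x y, a (x + y) = a x * a y)
    (i : Fin k) (z : ZMod 2) : Q e a i z * Q e a i z = Q e a i z := by
  have hA := a_sq a (Pi.single i 1) hadd h0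
  have hu := ee_mul_self e z
  have h2 := half_two e
  simp only [Q]
  linear_combination (e 2⁻¹ * e 2⁻¹ * ee e z * ee e z) * hA
    + (e 2⁻¹ * e 2⁻¹) * hu
    + (e 2⁻¹ + e 2⁻¹ * ee e z * a (Pi.single i 1)) * h2

lemma Q_mul_Q_ne (h0 : a 0 = 1) (hadd : ∀ x y, a (x + y) = a x * a y)
    (i : Fin k) {z w : ZMod 2} (hzw : z ≠ w) : Q e a i z * Q e a i w = 0 := by
  have hA := a_sq a (Pi.single i 1) hadd h0
  have key : Q e a i 0 * Q e a i 1 = 0 := by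
    simp only [Q, ee, sgn_zero, sgn_one, map_one, map_neg]
    linear_combination (-(e 2⁻¹ * e 2⁻¹)) * hA
  rcases zmod2_cases z with hz | hz <;> rcases zmod2_cases w with hw | hw <;>
    subst hz <;> subst hw
  · exact absurd rfl hzw
  · exact key
  · rw [mul_comm]; exact key
  · exact absurd rfl hzw

lemma P_mul_P (h0 : a 0 = 1) (hadd : ∀ x y, a (x + y) = a x * a y)
    (c c' : Fin k → ZMod 2) :
    P e a c * P e a c' = if c = c' then P e a c else 0 := by
  rw [P, P, ← Finset.prod_mul_distrib]
  split_ifs with h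
  · subst h
    exact Finset.prod_congr rfl fun i _ => Q_mul_Q_same e a h0 hadd i (c i)
  · obtain ⟨i, hi⟩ : ∃ i, c i ≠ c' i := by
      by_contra hc; push_neg at hc; exact h (funext hc)
    exact Finset.prod_eq_zero (Finset.mem_univ i) (Q_mul_Q_ne e a h0 hadd i hi)

lemma a_decomp (h0 : a 0 = 1) (hadd : ∀ x y, a (x + y) = a x * a y)
    (x : Fin k → ZMod 2) :
    a x = ∑ c : Fin k → ZMod 2, ee e (∑ i, c i * x i) * P e a c := by
  calc a x = (∑ c : Fin k → ZMod 2, P e a c) * a x := by rw [sum_P, one_mul]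
  _ = ∑ c : Fin k → ZMod 2, P e a c * a x := Finset.sum_mul _ _ _
  _ = _ := Finset.sum_congr rfl fun c _ => P_mul_a e a h0 hadd c x

end Abstract

section Upper

variable {n k : ℕ}

set_option maxHeartbeats 1000000 in
set_option synthInstance.maxHeartbeats 400000 in
lemma key (f : Multiplicative (Fin k → ZMod 2) →* Sp n)
    (hf : Function.Injective f) : k ≤ n := by
  classical
  set g : (Fin k → ZMod 2) → Matrix (Fin n) (Fin n) ℍ[ℝ] :=
    fun x => (f (Multiplicative.ofAdd x)).val with hg
  have hg1 : g 0 = 1 := by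
    simp only [hg]
    rw [show Multiplicative.ofAdd (0 : Fin k → ZMod 2) = 1 from rfl, map_one]
    rfl
  have hgadd : ∀ x y, g (x + y) = g x * g y := by
    intro x y
    simp only [hg]
    rw [show Multiplicative.ofAdd (x + y) = Multiplicative.ofAdd x * Multiplicative.ofAdd y
      from rfl, map_mul]
    rfl
  have hginj : Function.Injective g := by
    intro x y hxy
    have : f (Multiplicative.ofAdd x) = f (Multiplicative.ofAdd y) := Subtype.ext hxy
    exact hf this
  have hcomm : ∀ p ∈ Set.range g, ∀ q ∈ Set.range g, p * q = q * p := by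
    rintro _ ⟨x, rfl⟩ _ ⟨y, rfl⟩
    rw [← hgadd, ← hgadd, add_comm]
  let T : Subalgebra ℝ (Matrix (Fin n) (Fin n) ℍ[ℝ]) := Algebra.adjoin ℝ (Set.range g)
  letI : CommRing T := Algebra.adjoinCommRingOfComm ℝ hcomm
  -- the inclusion of `T` in `M` as a ring hom
  let ι : T →+* Matrix (Fin n) (Fin n) ℍ[ℝ] :=
    { toFun := Subtype.val
      map_one' := rfl
      map_mul' := fun _ _ => rfl
      map_zero' := rfl
      map_add' := fun _ _ => rfl }
  have hι : Function.Injective ι := Subtype.val_injective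
  -- the real scalars inside `T`
  let e : ℝ →+* T :=
    { toFun := fun r => ⟨algebraMap ℝ (Matrix (Fin n) (Fin n) ℍ[ℝ]) r, Subalgebra.algebraMap_mem T r⟩
      map_one' := Subtype.ext (map_one _)
      map_mul' := fun r s => Subtype.ext (map_mul _ r s)
      map_zero' := Subtype.ext (map_zero _)
      map_add' := fun r s => Subtype.ext (map_add _ r s) }
  let a : (Fin k → ZMod 2) → T := fun x => ⟨g x, Algebra.subset_adjoin ⟨x, rfl⟩⟩
  have h0 : a 0 = 1 := Subtype.ext hg1
  have hadd : ∀ x y, a (x + y) = a x * a y := fun x y => Subtype.ext (hgadd x y)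
  -- the set of characters with nonzero joint projection
  let S : Finset (Fin k → ZMod 2) := Finset.univ.filter fun c => P e a c ≠ 0
  -- Claim A : k ≤ S.card
  have claimA : k ≤ S.card := by
    let Φ : (Fin k → ZMod 2) → (S → ZMod 2) := fun x c => ∑ i, (c : Fin k → ZMod 2) i * x i
    have hΦ : Function.Injective Φ := by
      intro x y hxy
      apply hginj
      have hx := a_decomp e a h0 hadd x
      have hy := a_decomp e a h0 hadd y
      have hmid : ∑ c : Fin k → ZMod 2, ee e (∑ i, c i * x i) * P e a c
          = ∑ c : Fin k → ZMod 2, ee e (∑ i, c i * y i) * P e a c := by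
        refine Finset.sum_congr rfl fun c _ => ?_
        by_cases hc : P e a c = 0
        · rw [hc, mul_zero, mul_zero]
        · have hcS : c ∈ S := Finset.mem_filter.2 ⟨Finset.mem_univ c, hc⟩
          have hcc := congrFun hxy ⟨c, hcS⟩
          simp only [Φ] at hcc
          rw [hcc]
      have : a x = a y := hx.trans (hmid.trans hy.symm)
      exact congrArg (fun t : T => t.val) this
    have hcard := Fintype.card_le_of_injective Φ hΦ
    rw [Fintype.card_fun, Fintype.card_fun, ZMod.card, Fintype.card_fin,
      Fintype.card_coe] at hcard
    exact (Nat.pow_le_pow_iff_right (by norm_num)).1 hcard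
  -- Claim B : S.card ≤ n
  have claimB : S.card ≤ n := by
    let Pm : (Fin k → ZMod 2) → Matrix (Fin n) (Fin n) ℍ[ℝ] := fun c => ι (P e a c)
    have hPm : ∀ c c', Pm c * Pm c' = if c = c' then Pm c else 0 := by
      intro c c'
      have h1 := congrArg ι (P_mul_P e a h0 hadd c c')
      rw [map_mul] at h1
      split_ifs with h
      · rwa [if_pos h] at h1
      · rw [if_neg h, map_zero] at h1; exact h1
    have hex : ∀ c : S, ∃ i j, Pm (c : Fin k → ZMod 2) i j ≠ 0 := by
      rintro ⟨c, hc⟩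
      have hne : P e a c ≠ 0 := (Finset.mem_filter.1 hc).2
      have hne' : Pm c ≠ 0 := fun h => hne (hι (by rwa [map_zero]))
      by_contra hcon
      push_neg at hcon
      exact hne' (Matrix.ext fun i j => hcon i j)
    choose r j hrj using hex
    let v : S → (Fin n → ℍ[ℝ]) := fun c => Pm (c : Fin k → ZMod 2) (r c)
    have hv0 : ∀ c, v c ≠ 0 := fun c h => hrj c (by
      have := congrFun h (j c); simpa using this)
    have hvrow : ∀ c : S, v c = Matrix.vecMul (Pi.single (r c) 1) (Pm c) := by
      intro c
      rw [Matrix.single_one_vecMul]; rfl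
    have hvP : ∀ c c' : S, Matrix.vecMul (v c) (Pm c') = if c = c' then v c else 0 := by
      intro c c'
      rw [hvrow, Matrix.vecMul_vecMul, hPm]
      rcases eq_or_ne c c' with h | h
      · subst h
        rw [if_pos rfl, if_pos rfl, ← hvrow]
      · rw [if_neg (fun hh => h (Subtype.ext hh)), if_neg h, Matrix.vecMul_zero]
    have hli : LinearIndependent ℍ[ℝ] v := by
      rw [linearIndependent_iff']
      intro s gc hsum c₀ hc₀
      have happ := congrArg ((Pm (c₀ : Fin k → ZMod 2)).vecMulLinear) hsum
      rw [map_sum, map_zero] at happ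
      simp only [map_smul, Matrix.vecMulLinear_apply] at happ
      have hterm : ∀ c ∈ s, gc c • Matrix.vecMul (v c) (Pm (c₀ : Fin k → ZMod 2))
          = if c = c₀ then gc c • v c else 0 := by
        intro c _
        rw [hvP]
        split_ifs with h
        · rfl
        · rw [smul_zero]
      rw [Finset.sum_congr rfl hterm,
        Finset.sum_ite_eq' s c₀ (fun c => gc c • v c), if_pos hc₀] at happ
      by_contra hne
      exact hv0 c₀ (by
        have := congrArg (fun w => (gc c₀)⁻¹ • w) happ
        simpa [smul_smul, inv_mul_cancel₀ hne] using this)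
    have hcard := hli.fintype_card_le_finrank
    rwa [Fintype.card_coe, Module.finrank_pi, Fintype.card_fin] at hcard
  exact claimA.trans claimB

end Upper

section Lower

/-- The diagonal matrix of signs attached to `x : (ZMod 2)^n`. -/
noncomputable def diagMap (n : ℕ) (x : Fin n → ZMod 2) : Matrix (Fin n) (Fin n) ℍ[ℝ] :=
  Matrix.diagonal fun j => ((sgn (x j) : ℝ) : ℍ[ℝ])

lemma diagMap_mul (n : ℕ) (x y : Fin n → ZMod 2) :
    diagMap n x * diagMap n y = diagMap n (x + y) := by
  rw [diagMap, diagMap, diagMap, Matrix.diagonal_mul_diagonal,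
    show (fun i => ((sgn (x i) : ℝ) : ℍ[ℝ]) * ((sgn (y i) : ℝ) : ℍ[ℝ]))
        = fun i => ((sgn ((x + y) i) : ℝ) : ℍ[ℝ]) from funext fun i => by
      rw [Pi.add_apply, sgn_add, Quaternion.coe_mul]]

lemma diagMap_zero (n : ℕ) : diagMap n 0 = 1 := by
  rw [diagMap, show (fun j : Fin n => ((sgn ((0 : Fin n → ZMod 2) j) : ℝ) : ℍ[ℝ]))
    = fun _ => 1 from funext fun j => by rw [Pi.zero_apply, sgn_zero, Quaternion.coe_one],
    Matrix.diagonal_one]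

lemma diagMap_mem (n : ℕ) (x : Fin n → ZMod 2) : diagMap n x ∈ Sp n := by
  have hmul : diagMap n x * diagMap n x = 1 := by
    rw [diagMap_mul]
    have hxx : x + x = 0 := by
      funext i
      have : ∀ z : ZMod 2, z + z = 0 := by decide
      exact this (x i)
    rw [hxx, diagMap_zero]
  have hstar : star (diagMap n x) = diagMap n x := by
    rw [diagMap, Matrix.star_eq_conjTranspose, Matrix.diagonal_conjTranspose,
      show (star fun j => ((sgn (x j) : ℝ) : ℍ[ℝ])) = fun j => ((sgn (x j) : ℝ) : ℍ[ℝ]) from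
        funext fun j => Quaternion.star_coe _]
  rw [Unitary.mem_iff, hstar]
  exact ⟨hmul, hmul⟩

lemma diagMap_inj (n : ℕ) : Function.Injective (diagMap n) := by
  intro x y hxy
  funext j
  have hj := congrFun (congrFun hxy j) j
  rw [diagMap, diagMap, Matrix.diagonal_apply_eq, Matrix.diagonal_apply_eq] at hj
  exact sgn_inj (Quaternion.coe_injective hj)

lemma lower (n : ℕ) :
    ∃ f : Multiplicative (Fin n → ZMod 2) →* Sp n, Function.Injective f := by
  classical
  refine ⟨{ toFun := fun x => ⟨diagMap n (Multiplicative.toAdd x), diagMap_mem n _⟩,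
            map_one' := ?_, map_mul' := ?_ }, ?_⟩
  · exact Subtype.ext (diagMap_zero n)
  · intro x y
    exact Subtype.ext (diagMap_mul n (Multiplicative.toAdd x) (Multiplicative.toAdd y)).symm
  · intro x y hxy
    have := diagMap_inj n (Subtype.ext_iff.1 hxy)
    exact Multiplicative.toAdd.injective this

end Lower

end TwoRankSp

/-- Chen–Nagano: the 2-rank of the compact symplectic group `Sp(n)` is `n`. -/
theorem twoRank_Sp (n : ℕ) (hn : 1 ≤ n) : twoRank (Sp n) = n := by
  obtain ⟨f, hf⟩ := TwoRankSp.lower n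
  have hub : ∀ K ∈ {k : ℕ | ∃ f : Multiplicative (Fin k → ZMod 2) →* Sp n,
      Function.Injective f}, K ≤ n := by
    rintro K ⟨f', hf'⟩
    exact TwoRankSp.key f' hf'
  rw [twoRank]
  exact le_antisymm (csSup_le ⟨n, f, hf⟩ hub) (le_csSup ⟨n, hub⟩ ⟨f, hf⟩)
end

section
/- Let n ≥ 1, let Sⁿ be the unit sphere in Euclidean space ℝ^{n+1}, let o ∈ Sⁿ, and let f : Sⁿ → ℝ be a continuous function which is isotropic at o, i.e. f(g(x)) = f(x) for every x ∈ Sⁿ and every linear isometric equivalence g of ℝ^{n+1} with g(o) = o. Then f maps some great antipodal set of Sⁿ to a single point: there exists x ∈ Sⁿ with f(−x) = f(x) (the pair {x, −x} being a great antipodal set of Sⁿ, since #₂Sⁿ = 2). -/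
/-- Chen's Borsuk–Ulam type theorem for the sphere: a continuous function `f` on the unit
sphere `Sⁿ ⊆ ℝ^(n+1)` that is invariant under the isotropy group at a base point
`o ∈ Sⁿ` (all linear isometries of `ℝ^(n+1)` fixing `o`) maps some great antipodal set
`{x, -x}` of `Sⁿ` to a single point. -/
theorem isotropic_maps_great_antipodal_set_to_point (n : ℕ) (hn : 1 ≤ n)
    (o : EuclideanSpace ℝ (Fin (n + 1)))
    (ho : o ∈ Metric.sphere (0 : EuclideanSpace ℝ (Fin (n + 1))) 1)
    (f : EuclideanSpace ℝ (Fin (n + 1)) → ℝ)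
    (hf : ContinuousOn f (Metric.sphere 0 1))
    (hiso : ∀ g : EuclideanSpace ℝ (Fin (n + 1)) ≃ₗᵢ[ℝ] EuclideanSpace ℝ (Fin (n + 1)),
      g o = o → ∀ x ∈ Metric.sphere (0 : EuclideanSpace ℝ (Fin (n + 1))) 1, f (g x) = f x) :
    ∃ x ∈ Metric.sphere (0 : EuclideanSpace ℝ (Fin (n + 1))) 1, f (-x) = f x := by
  have ho1 : ‖o‖ = 1 := by simpa using ho
  have ho0 : o ≠ 0 := by intro h; simp [h] at ho1
  -- the orthogonal complement of `o` is nontrivial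
  have hrank : 0 < Module.finrank ℝ ((ℝ ∙ o)ᗮ : Submodule ℝ (EuclideanSpace ℝ (Fin (n + 1)))) := by
    have h1 : Module.finrank ℝ (ℝ ∙ o : Submodule ℝ (EuclideanSpace ℝ (Fin (n + 1)))) = 1 :=
      finrank_span_singleton ho0
    have h2 := Submodule.finrank_add_finrank_orthogonal (K := (ℝ ∙ o : Submodule ℝ (EuclideanSpace ℝ (Fin (n + 1)))))
    have h3 : Module.finrank ℝ (EuclideanSpace ℝ (Fin (n + 1))) = n + 1 := by
      simp [finrank_euclideanSpace]
    omega
  have hne : ((ℝ ∙ o)ᗮ : Submodule ℝ (EuclideanSpace ℝ (Fin (n + 1)))) ≠ ⊥ := by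
    intro h
    rw [h] at hrank
    simp at hrank
  obtain ⟨v, hv, hv0⟩ := Submodule.exists_mem_ne_zero_of_ne_bot hne
  set x : EuclideanSpace ℝ (Fin (n + 1)) := ‖v‖⁻¹ • v with hxdef
  have hx0 : x ≠ 0 := by
    simp [hxdef, smul_eq_zero, hv0, norm_eq_zero, inv_eq_zero]
  have hxnorm : ‖x‖ = 1 := by
    rw [hxdef, norm_smul, norm_inv, norm_norm, inv_mul_cancel₀ (norm_ne_zero_iff.2 hv0)]
  have hxmem : x ∈ ((ℝ ∙ o)ᗮ : Submodule ℝ (EuclideanSpace ℝ (Fin (n + 1)))) := Submodule.smul_mem _ _ hv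
  have hxsphere : x ∈ Metric.sphere (0 : EuclideanSpace ℝ (Fin (n + 1))) 1 := by simpa using hxnorm
  refine ⟨x, hxsphere, ?_⟩
  -- reflection across the hyperplane orthogonal to `x`
  set K : Submodule ℝ (EuclideanSpace ℝ (Fin (n + 1))) := ℝ ∙ x
  have h0 : (inner ℝ o x : ℝ) = 0 :=
    (Submodule.mem_orthogonal _ _).1 hxmem o (Submodule.mem_span_singleton_self o)
  have hoK : o ∈ Kᗮ := by
    rw [Submodule.mem_orthogonal]
    intro u hu
    obtain ⟨c, rfl⟩ := Submodule.mem_span_singleton.1 hu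
    rw [real_inner_smul_left]; rw [real_inner_comm] at h0; rw [h0, mul_zero]
  set g := Submodule.reflection Kᗮ
  have hgo : g o = o := Submodule.reflection_mem_subspace_eq_self hoK
  have hgx : g x = -x :=
    Submodule.reflection_mem_subspace_orthogonal_precomplement_eq_neg
      (Submodule.mem_span_singleton_self x)
  have := hiso g hgo x hxsphere
  rw [hgx] at this
  exact this
end

section
/- Let G and G'' be compact connected Lie groups and let π : G → G'' be a continuous surjective group homomorphism whose kernel has exactly 2 elements (so that π is a double covering). Then the 2-numbers satisfy #₂G ≤ 2·#₂G''. -/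
/-- A subset `A` of a group `G` is antipodal if the point symmetry `s_x : y ↦ x * y⁻¹ * x`
fixes every point of `A`, for every `x ∈ A`. -/
def IsAntipodalSet {G : Type*} [Group G] (A : Set G) : Prop :=
  ∀ x ∈ A, ∀ y ∈ A, x * y⁻¹ * x = y

/-- The 2-number `#₂G` of a group: the supremum of the cardinalities of antipodal subsets. -/
noncomputable def twoNumber (G : Type*) [Group G] : ℕ∞ :=
  ⨆ (A : Set G) (_ : IsAntipodalSet A), A.encard

/-- Chen–Nagano: if the compact connected Lie group `G` is a double cover of `G''`
(via a continuous surjective homomorphism with kernel of order 2), then `#₂G ≤ 2 ⬝ #₂G''`. -/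
theorem twoNumber_le_two_mul_of_doubleCover
    {E : Type*} [NormedAddCommGroup E] [NormedSpace ℝ E] [FiniteDimensional ℝ E]
    {H : Type*} [TopologicalSpace H] (I : ModelWithCorners ℝ E H)
    {E'' : Type*} [NormedAddCommGroup E''] [NormedSpace ℝ E''] [FiniteDimensional ℝ E'']
    {H'' : Type*} [TopologicalSpace H''] (I'' : ModelWithCorners ℝ E'' H'')
    (G : Type*) [Group G] [TopologicalSpace G] [ChartedSpace H G]
    [LieGroup I (⊤ : ℕ∞) G] [CompactSpace G] [ConnectedSpace G]
    (G'' : Type*) [Group G''] [TopologicalSpace G''] [ChartedSpace H'' G'']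
    [LieGroup I'' (⊤ : ℕ∞) G''] [CompactSpace G''] [ConnectedSpace G'']
    (π : G →* G'') (hcont : Continuous π) (hsurj : Function.Surjective π)
    (hker : Nat.card π.ker = 2) :
    twoNumber G ≤ 2 * twoNumber G'' := by
  -- Key fact: any two non-identity elements of the kernel are equal.
  have hker2 : ∀ u v : G, π u = 1 → π v = 1 → u ≠ 1 → v ≠ 1 → u = v := by
    obtain ⟨a, b, hab, huniv⟩ := (Nat.card_eq_two_iff (α := ↥π.ker)).mp hker
    intro u v hu hv hu1 hv1
    have hmem : ∀ w : π.ker, (w : G) ≠ 1 → (w : G) = (a : G) ∨ (w : G) = (b : G) := by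
      intro w _
      have : w ∈ ({a, b} : Set π.ker) := huniv ▸ Set.mem_univ w
      rcases this with h | h <;> [left; right] <;> rw [h]
    -- one of a, b is the identity
    have h1 : (1 : π.ker) ∈ ({a, b} : Set π.ker) := huniv ▸ Set.mem_univ _
    have key : ∀ w w' : π.ker, (w : G) ≠ 1 → (w' : G) ≠ 1 → (w : G) = (w' : G) := by
      intro w w' hw hw'
      rcases h1 with h | h
      · have ha : (a : G) = 1 := by rw [← h]; rfl
        rcases hmem w hw with h' | h' <;> rcases hmem w' hw' with h'' | h''
        · exact absurd (h' ▸ ha) hw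
        · exact absurd (h' ▸ ha) hw
        · exact absurd (h'' ▸ ha) hw'
        · rw [h', h'']
      · have hb : (b : G) = 1 := by rw [← h]; rfl
        rcases hmem w hw with h' | h' <;> rcases hmem w' hw' with h'' | h''
        · rw [h', h'']
        · exact absurd (h'' ▸ hb) hw'
        · exact absurd (h' ▸ hb) hw
        · exact absurd (h' ▸ hb) hw
    exact key ⟨u, hu⟩ ⟨v, hv⟩ hu1 hv1
  -- choice of preimages
  set rep : G'' → G := Function.surjInv hsurj with hrep
  have hrep_spec : ∀ b, π (rep b) = b := Function.surjInv_eq hsurj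
  refine iSup₂_le fun A hA => ?_
  -- image is antipodal
  have hA'' : IsAntipodalSet (π '' A) := by
    rintro _ ⟨x, hx, rfl⟩ _ ⟨y, hy, rfl⟩
    rw [← map_inv, ← map_mul, ← map_mul, hA x hx y hy]
  -- split A
  set A₁ : Set G := {x ∈ A | x = rep (π x)} with hA₁
  set A₂ : Set G := {x ∈ A | x ≠ rep (π x)} with hA₂
  have hunion : A = A₁ ∪ A₂ := by
    ext x
    simp only [hA₁, hA₂, Set.mem_union, Set.mem_setOf_eq]
    tauto
  have hinj₁ : Set.InjOn π A₁ := by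
    rintro x ⟨_, hx⟩ y ⟨_, hy⟩ hxy
    rw [hx, hy, hxy]
  have hinj₂ : Set.InjOn π A₂ := by
    rintro x ⟨_, hx⟩ y ⟨_, hy⟩ hxy
    have h1 : π (x * (rep (π x))⁻¹) = 1 := by
      rw [map_mul, map_inv, hrep_spec, mul_inv_cancel]
    have h2 : π (y * (rep (π x))⁻¹) = 1 := by
      rw [map_mul, map_inv, hrep_spec, ← hxy, mul_inv_cancel]
    have hn1 : x * (rep (π x))⁻¹ ≠ 1 := by
      intro h; exact hx (by rwa [mul_inv_eq_one] at h)
    have hn2 : y * (rep (π x))⁻¹ ≠ 1 := by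
      intro h
      apply hy
      rw [← hxy]
      rwa [mul_inv_eq_one] at h
    have := hker2 _ _ h1 h2 hn1 hn2
    exact mul_right_cancel this
  have hsub₁ : π '' A₁ ⊆ π '' A := Set.image_mono fun x hx => hx.1
  have hsub₂ : π '' A₂ ⊆ π '' A := Set.image_mono fun x hx => hx.1
  calc A.encard = (A₁ ∪ A₂).encard := by rw [← hunion]
    _ ≤ A₁.encard + A₂.encard := Set.encard_union_le _ _
    _ = (π '' A₁).encard + (π '' A₂).encard := by
        rw [hinj₁.encard_image, hinj₂.encard_image]
    _ ≤ (π '' A).encard + (π '' A).encard :=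
        add_le_add (Set.encard_le_encard hsub₁) (Set.encard_le_encard hsub₂)
    _ = 2 * (π '' A).encard := (two_mul _).symm
    _ ≤ 2 * twoNumber G'' := by
        gcongr
        exact le_iSup₂ (f := fun (B : Set G'') (_ : IsAntipodalSet B) => B.encard) (π '' A) hA''
end

section
/- Let G̃ and G be compact connected Lie groups and let φ : G̃ → G be a continuous surjective group homomorphism whose kernel is a finite central subgroup of odd order k (so that φ is a k-fold covering with k odd). Then the 2-numbers satisfy #₂G̃ = #₂G. -/
section Aux

variable {Gt G : Type*} [Group Gt] [Group G]

/-- An element of the (odd-order) kernel whose square is `1` is trivial. -/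
private lemma ker_sq_eq_one (φ : Gt →* G) {k : ℕ} (hk : Odd k) (hker : Nat.card φ.ker = k)
    {z : Gt} (hz : φ z = 1) (hz2 : z * z = 1) : z = 1 := by
  obtain ⟨m, hm⟩ := hk
  have hzk : z ^ k = 1 := by
    have h : (⟨z, hz⟩ : φ.ker) ^ k = 1 := by
      rw [← hker]; exact pow_card_eq_one'
    have := congrArg (Subtype.val) h
    simpa using this
  have hz2' : z ^ 2 = 1 := by rw [pow_two]; exact hz2
  have h : (z ^ 2) ^ m * z = 1 := by rw [← pow_mul, ← pow_succ, ← hm, hzk]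
  rwa [hz2', one_pow, one_mul] at h

/-- Purely group-theoretic core of the theorem. -/
private lemma twoNumber_eq_of_oddCover_aux (φ : Gt →* G)
    (hsurj : Function.Surjective φ) (hcentral : φ.ker ≤ Subgroup.center Gt)
    {k : ℕ} (hk : Odd k) (hker : Nat.card φ.ker = k) :
    twoNumber Gt = twoNumber G := by
  obtain ⟨m, hm⟩ := hk
  have hk' : Odd k := ⟨m, hm⟩
  apply le_antisymm
  · -- push antipodal sets down
    refine iSup₂_le fun A hA => ?_
    have hinj : Set.InjOn φ A := by
      intro x hx y hy hxy
      have h1 : y * x⁻¹ * y = x := hA y hy x hx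
      have hker1 : φ (y * x⁻¹) = 1 := by
        rw [map_mul, map_inv, hxy]; simp
      have hsq : (y * x⁻¹) * (y * x⁻¹) = 1 := by
        have : (y * x⁻¹ * y) * x⁻¹ = x * x⁻¹ := by rw [h1]
        simpa [mul_assoc] using this
      have := ker_sq_eq_one φ hk' hker hker1 hsq
      have hyx : y = x := by
        have h2 : y * x⁻¹ = 1 := this
        calc y = y * x⁻¹ * x := by group
          _ = x := by rw [h2, one_mul]
      exact hyx.symm
    have hanti : IsAntipodalSet (φ '' A) := by
      rintro _ ⟨x, hx, rfl⟩ _ ⟨y, hy, rfl⟩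
      rw [← map_inv, ← map_mul, ← map_mul, hA x hx y hy]
    calc A.encard = (φ '' A).encard := (hinj.encard_image).symm
      _ ≤ twoNumber G := le_iSup₂_of_le (φ '' A) hanti le_rfl
  · -- lift antipodal sets
    refine iSup₂_le fun A hA => ?_
    rcases Set.eq_empty_or_nonempty A with rfl | ⟨a₀, ha₀⟩
    · simp
    -- translate so that 1 ∈ B
    set B : Set G := (fun g => a₀⁻¹ * g) '' A with hBdef
    have hBanti : IsAntipodalSet B := by
      rintro _ ⟨x, hx, rfl⟩ _ ⟨y, hy, rfl⟩
      have := hA x hx y hy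
      calc a₀⁻¹ * x * (a₀⁻¹ * y)⁻¹ * (a₀⁻¹ * x) = a₀⁻¹ * (x * y⁻¹ * x) := by group
        _ = a₀⁻¹ * y := by rw [this]
    have hBcard : B.encard = A.encard :=
      Function.Injective.encard_image (fun a b h => by
        simpa using mul_left_cancel h) A
    have h1B : (1 : G) ∈ B := ⟨a₀, ha₀, by simp⟩
    have hBsq : ∀ b ∈ B, b * b = 1 := fun b hb => by
      have := hBanti b hb 1 h1B
      simpa using this
    -- the lifting map
    let s : G → Gt := Function.surjInv hsurj
    have hs : ∀ b, φ (s b) = b := fun b => Function.surjInv_eq hsurj b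
    let L : G → Gt := fun b => s b * ((s b * s b)⁻¹) ^ (m + 1)
    have hLker : ∀ b ∈ B, φ (s b * s b) = 1 := fun b hb => by
      rw [map_mul, hs, hBsq b hb]
    have hLcenter : ∀ b ∈ B, (s b * s b) ∈ Subgroup.center Gt := fun b hb =>
      hcentral (hLker b hb)
    have hLphi : ∀ b ∈ B, φ (L b) = b := by
      intro b hb
      have : φ (L b) = φ (s b) * (φ (s b * s b))⁻¹ ^ (m + 1) := by
        simp [L, map_mul, map_pow, map_inv]
      rw [this, hLker b hb, hs]; simp
    have hLsq : ∀ b ∈ B, L b * L b = 1 := by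
      intro b hb
      have hc : ∀ g : Gt, g * (s b * s b) = (s b * s b) * g := fun g =>
        (Subgroup.mem_center_iff.mp (hLcenter b hb) g)
      have hcomm : Commute (s b) (((s b * s b)⁻¹) ^ (m + 1)) := by
        apply Commute.pow_right
        exact Commute.inv_right (hc (s b))
      have hck : (s b * s b) ^ k = 1 := by
        have h : (⟨s b * s b, hLker b hb⟩ : φ.ker) ^ k = 1 := by
          rw [← hker]; exact pow_card_eq_one'
        have := congrArg (Subtype.val) h
        simpa using this
      calc L b * L b
          = (s b * ((s b * s b)⁻¹) ^ (m + 1)) ^ 2 := (pow_two _).symm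
        _ = (s b) ^ 2 * (((s b * s b)⁻¹) ^ (m + 1)) ^ 2 := hcomm.mul_pow 2
        _ = (s b * s b) * ((s b * s b) ^ ((m + 1) * 2))⁻¹ := by
            rw [pow_two, ← pow_mul, inv_pow]
        _ = (s b * s b) * ((s b * s b) ^ k * (s b * s b))⁻¹ := by
            rw [show (m + 1) * 2 = (2 * m + 1) + 1 by ring, pow_succ, ← hm]
        _ = 1 := by rw [hck, one_mul, mul_inv_cancel]
    -- the lifted set
    have hLinj : Set.InjOn L B := fun x hx y hy h => by
      have : φ (L x) = φ (L y) := by rw [h]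
      rwa [hLphi x hx, hLphi y hy] at this
    have hCanti : IsAntipodalSet (L '' B) := by
      rintro _ ⟨b₁, hb₁, rfl⟩ _ ⟨b₂, hb₂, rfl⟩
      set x := L b₁
      set y := L b₂
      have hx2 : x * x = 1 := hLsq b₁ hb₁
      have hy2 : y * y = 1 := hLsq b₂ hb₂
      have hxinv : x⁻¹ = x := inv_eq_of_mul_eq_one_right hx2
      have hyinv : y⁻¹ = y := inv_eq_of_mul_eq_one_right hy2
      set z := x * y⁻¹ * x * y⁻¹ with hz
      have hzker : φ z = 1 := by
        have h12 : φ x * (φ y)⁻¹ * φ x = φ y := by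
          rw [hLphi b₁ hb₁, hLphi b₂ hb₂]
          exact hBanti b₁ hb₁ b₂ hb₂
        have : φ z = (φ x * (φ y)⁻¹ * φ x) * (φ y)⁻¹ := by
          simp [hz, map_mul, map_inv, mul_assoc]
        rw [this, h12, mul_inv_cancel]
      have hzc : ∀ g : Gt, g * z = z * g := fun g =>
        Subgroup.mem_center_iff.mp (hcentral hzker) g
      have hy2' : y⁻¹ * y⁻¹ = 1 := by rw [hyinv]; exact hy2
      have hxx : ∀ t : Gt, x * (x * t) = t := fun t => by
        rw [← mul_assoc, hx2, one_mul]
      have hyy : ∀ t : Gt, y⁻¹ * (y⁻¹ * t) = t := fun t => by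
        rw [← mul_assoc, hy2', one_mul]
      -- z commutes with x, and x conjugates z to z⁻¹; hence z² = 1
      have h1' : x * (z * x) = z := by
        rw [← mul_assoc, hzc x, mul_assoc, hx2, mul_one]
      have hone : z * (x * (z * x)) = 1 := by
        simp only [hz, mul_assoc]
        rw [hxx, hyy, hxx, hyy, hx2]
      rw [h1'] at hone
      have hz1 : z = 1 := ker_sq_eq_one φ hk' hker hzker hone
      have hz1' : x * y⁻¹ * x * y⁻¹ = 1 := hz.symm.trans hz1
      calc x * y⁻¹ * x = (x * y⁻¹ * x * y⁻¹) * y := by group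
        _ = y := by rw [hz1', one_mul]
    calc A.encard = B.encard := hBcard.symm
      _ = (L '' B).encard := (hLinj.encard_image).symm
      _ ≤ twoNumber Gt := le_iSup₂_of_le (L '' B) hCanti le_rfl

end Aux

/-- Chen–Nagano: if `φ : G̃ → G` is a `k`-fold covering homomorphism of compact connected
Lie groups (continuous, surjective, with finite central kernel of odd order `k`),
then `#₂G̃ = #₂G`. -/
theorem twoNumber_eq_of_oddCover
    {Et : Type*} [NormedAddCommGroup Et] [NormedSpace ℝ Et] [FiniteDimensional ℝ Et]
    {Ht : Type*} [TopologicalSpace Ht] (It : ModelWithCorners ℝ Et Ht)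
    {E : Type*} [NormedAddCommGroup E] [NormedSpace ℝ E] [FiniteDimensional ℝ E]
    {H : Type*} [TopologicalSpace H] (I : ModelWithCorners ℝ E H)
    (Gt : Type*) [Group Gt] [TopologicalSpace Gt] [ChartedSpace Ht Gt]
    [LieGroup It (⊤ : ℕ∞) Gt] [CompactSpace Gt] [ConnectedSpace Gt]
    (G : Type*) [Group G] [TopologicalSpace G] [ChartedSpace H G]
    [LieGroup I (⊤ : ℕ∞) G] [CompactSpace G] [ConnectedSpace G]
    (φ : Gt →* G) (hcont : Continuous φ) (hsurj : Function.Surjective φ)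
    (hcentral : φ.ker ≤ Subgroup.center Gt)
    (k : ℕ) (hk : Odd k) (hker : Nat.card φ.ker = k) :
    twoNumber Gt = twoNumber G :=
  twoNumber_eq_of_oddCover_aux φ hsurj hcentral hk hker
end
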